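/- arXiv:1707.06309 — 3 statements merged into one kernel-verified Lean document; each statement's English description precedes it below -/
import Mathlib

section
/- The univariate complex Hermite polynomials satisfy the exponential generating function ∑_{m,n=0}^∞ (u^m v^n)/(m! n!) H_{m,n}^ν(z, z̄) = exp(ν(u z + v z̄ - u v)) for all complex u, v, z and ν > 0, with the double series converging absolutely. -/
noncomputable def complexHermite (ν : ℝ) (m n : ℕ) (z w : ℂ) : ℂ :=
  (-1)^(m+n) * Complex.exp ((ν : ℂ) * z * w) *
    iteratedDeriv m (fun w' => iteratedDeriv n (fun z' => Complex.exp (-(ν : ℂ) * z' * w')) z) w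

open Finset

/-- exp series for ℂ -/
lemma CH.hasSum_exp (x : ℂ) :
    HasSum (fun n : ℕ => x ^ n / (n.factorial : ℂ)) (Complex.exp x) := by
  rw [Complex.exp_eq_exp_ℂ]
  exact NormedSpace.expSeries_div_hasSum_exp x

lemma CH.summable_norm_exp (x : ℂ) :
    Summable (fun n : ℕ => ‖x ^ n / (n.factorial : ℂ)‖) := by
  have : (fun n : ℕ => ‖x ^ n / (n.factorial : ℂ)‖) =
      fun n : ℕ => ‖x‖ ^ n / (n.factorial : ℝ) := by
    funext n
    simp [norm_div, norm_pow, Complex.norm_natCast]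
  rw [this]
  exact Real.summable_pow_div_factorial ‖x‖

lemma CH.contDiff_aux (c : ℂ) (n m : ℕ) :
    ContDiff ℂ m (fun w : ℂ => w ^ n * Complex.exp (c * w)) :=
  (contDiff_id.pow n).mul (Complex.contDiff_exp.comp (contDiff_const.mul contDiff_id))

lemma CH.iteratedDeriv_add {m : ℕ} {f g : ℂ → ℂ} (hf : ContDiff ℂ m f)
    (hg : ContDiff ℂ m g) (x : ℂ) :
    iteratedDeriv m (fun x => f x + g x) x = iteratedDeriv m f x + iteratedDeriv m g x := by
  have : (fun x => f x + g x) = f + g := rfl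
  rw [this]
  simp only [← iteratedDerivWithin_univ]
  exact iteratedDerivWithin_add (Set.mem_univ x) uniqueDiffOn_univ
    hf.contDiffWithinAt hg.contDiffWithinAt

lemma CH.iteratedDeriv_const_mul' {m : ℕ} (c : ℂ) {f : ℂ → ℂ} (hf : ContDiff ℂ m f) (x : ℂ) :
    iteratedDeriv m (fun z => c * f z) x = c * iteratedDeriv m f x := by
  simp only [← iteratedDerivWithin_univ]
  exact iteratedDerivWithin_const_mul (Set.mem_univ x) uniqueDiffOn_univ c hf.contDiffWithinAt

lemma CH.hasDerivAt_aux (c x : ℂ) (n : ℕ) :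
    HasDerivAt (fun w : ℂ => w ^ n * Complex.exp (c * w))
      ((n : ℂ) * x ^ (n - 1) * Complex.exp (c * x) + x ^ n * (Complex.exp (c * x) * c)) x := by
  have h1 : HasDerivAt (fun w : ℂ => Complex.exp (c * w)) (Complex.exp (c * x) * c) x := by
    have := (Complex.hasDerivAt_exp (c * x)).comp x ((hasDerivAt_id x).const_mul c)
    simpa [Function.comp_def] using this
  exact (hasDerivAt_pow n x).mul h1

/-- descFactorial cast identity -/
lemma CH.descFactorial_cast (n k : ℕ) :
    (n : ℂ) * ((n - 1).descFactorial k : ℂ) = (n.descFactorial (k + 1) : ℂ) := by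
  cases n with
  | zero => simp
  | succ n =>
    rw [Nat.succ_descFactorial_succ]
    push_cast
    simp

/-- The key iterated-derivative formula. -/
lemma CH.key (m : ℕ) : ∀ (n : ℕ) (c x : ℂ),
    iteratedDeriv m (fun w : ℂ => w ^ n * Complex.exp (c * w)) x =
      ∑ k ∈ range (m + 1), (m.choose k : ℂ) * (n.descFactorial k : ℂ) * c ^ (m - k)
        * x ^ (n - k) * Complex.exp (c * x) := by
  induction m with
  | zero => intro n c x; simp [iteratedDeriv_zero]
  | succ m ih =>
    intro n c x
    rw [iteratedDeriv_succ']
    have hderiv : (deriv fun w : ℂ => w ^ n * Complex.exp (c * w)) =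
        fun w => (n : ℂ) * (w ^ (n - 1) * Complex.exp (c * w))
          + c * (w ^ n * Complex.exp (c * w)) := by
      funext w
      rw [(CH.hasDerivAt_aux c w n).deriv]
      ring
    rw [hderiv]
    have hA : ContDiff ℂ m (fun w : ℂ => w ^ (n - 1) * Complex.exp (c * w)) :=
      CH.contDiff_aux c (n - 1) m
    have hB : ContDiff ℂ m (fun w : ℂ => w ^ n * Complex.exp (c * w)) :=
      CH.contDiff_aux c n m
    rw [CH.iteratedDeriv_add ((contDiff_const.mul hA : ContDiff ℂ m _))
      ((contDiff_const.mul hB : ContDiff ℂ m _)) x,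
      CH.iteratedDeriv_const_mul' (n : ℂ) hA x, CH.iteratedDeriv_const_mul' c hB x,
      ih (n - 1) c x, ih n c x]
    -- now pure sum algebra
    rw [Finset.mul_sum, Finset.mul_sum]
    rw [Finset.sum_range_succ' (fun k => (((m+1).choose k : ℂ) * (n.descFactorial k : ℂ)
      * c ^ (m + 1 - k) * x ^ (n - k) * Complex.exp (c * x))) (m + 1)]
    rw [Finset.sum_range_succ' (fun k => c * ((m.choose k : ℂ) * (n.descFactorial k : ℂ)
      * c ^ (m - k) * x ^ (n - k) * Complex.exp (c * x))) m]
    have e1 : ∀ k ∈ range (m + 1),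
        ((m+1).choose (k+1) : ℂ) * (n.descFactorial (k+1) : ℂ) * c ^ (m + 1 - (k+1))
          * x ^ (n - (k+1)) * Complex.exp (c * x)
        = (n : ℂ) * ((m.choose k : ℂ) * ((n-1).descFactorial k : ℂ) * c ^ (m - k)
            * x ^ (n - 1 - k) * Complex.exp (c * x))
          + (m.choose (k+1) : ℂ) * (n.descFactorial (k+1) : ℂ) * c ^ (m - k)
            * x ^ (n - (k+1)) * Complex.exp (c * x) := by
      intro k _
      have hch : ((m+1).choose (k+1) : ℂ) = (m.choose k : ℂ) + (m.choose (k+1) : ℂ) := by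
        rw [Nat.choose_succ_succ]; push_cast; ring
      have hd : (n : ℂ) * ((n-1).descFactorial k : ℂ) = (n.descFactorial (k+1) : ℂ) :=
        CH.descFactorial_cast n k
      have hx : n - 1 - k = n - (k + 1) := by omega
      have hc : m + 1 - (k + 1) = m - k := by omega
      rw [hch, hx, hc, ← hd]
      ring
    rw [Finset.sum_congr rfl e1, Finset.sum_add_distrib]
    have e2 : ∑ k ∈ range (m + 1), ((m.choose (k+1) : ℂ) * (n.descFactorial (k+1) : ℂ)
          * c ^ (m - k) * x ^ (n - (k+1)) * Complex.exp (c * x))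
        = ∑ k ∈ range m, c * ((m.choose (k+1) : ℂ) * (n.descFactorial (k+1) : ℂ)
            * c ^ (m - (k+1)) * x ^ (n - (k+1)) * Complex.exp (c * x)) := by
      have hlast : ((m.choose (m + 1) : ℂ)) = 0 := by
        simp [Nat.choose_succ_self]
      rw [Finset.sum_range_succ, hlast, zero_mul, zero_mul, zero_mul, zero_mul, add_zero]
      refine Finset.sum_congr rfl (fun k hk => ?_)
      have hk' : k < m := Finset.mem_range.mp hk
      have h : m - k = (m - (k + 1)) + 1 := by omega
      rw [h, pow_succ]
      ring
    rw [e2]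
    simp only [Nat.choose_zero_right, Nat.descFactorial_zero, Nat.cast_one, Nat.sub_zero]
    ring

/-- Closed form for the complex Hermite polynomials. -/
lemma CH.complexHermite_eq (ν : ℝ) (m n : ℕ) (z w : ℂ) :
    complexHermite ν m n z w =
      ∑ k ∈ range (m + 1), (-1 : ℂ)^k * (m.choose k : ℂ) * (n.descFactorial k : ℂ)
        * (ν : ℂ)^(m + n - k) * z^(m - k) * w^(n - k) := by
  unfold complexHermite
  have h1 : (fun w' => iteratedDeriv n (fun z' => Complex.exp (-(ν : ℂ) * z' * w')) z)
      = fun w' => (-(ν : ℂ))^n * (w' ^ n * Complex.exp ((-(ν : ℂ) * z) * w')) := by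
    funext w'
    have h2 : (fun z' => Complex.exp (-(ν : ℂ) * z' * w'))
        = fun z' => Complex.exp ((-(ν : ℂ) * w') * z') := by
      funext z'; ring_nf
    rw [h2, iteratedDeriv_cexp_const_mul]
    rw [mul_pow]
    ring_nf
  rw [h1, CH.iteratedDeriv_const_mul' _ (CH.contDiff_aux _ n m) w,
    CH.key m n (-(ν : ℂ) * z) w, Finset.mul_sum, Finset.mul_sum]
  refine Finset.sum_congr rfl (fun k hk => ?_)
  have hk' : k ≤ m := Nat.lt_succ_iff.mp (Finset.mem_range.mp hk)
  have hexp : Complex.exp ((ν : ℂ) * z * w) * Complex.exp (-(ν : ℂ) * z * w) = 1 := by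
    rw [← Complex.exp_add]
    ring_nf
    exact Complex.exp_zero
  have hparity : (-1 : ℂ)^(m + n) * (-1 : ℂ)^n * (-1 : ℂ)^(m - k) = (-1 : ℂ)^k := by
    rw [← pow_add, ← pow_add]
    have : m + n + n + (m - k) = k + 2 * ((m - k) + n) := by omega
    rw [this, pow_add, pow_mul, neg_one_sq, one_pow, mul_one]
  have hν : m + n - k = n + (m - k) := by omega
  calc (-1 : ℂ)^(m+n) * Complex.exp ((ν : ℂ) * z * w) *
        ((-(ν : ℂ))^n * ((m.choose k : ℂ) * (n.descFactorial k : ℂ)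
          * (-(ν : ℂ) * z) ^ (m - k) * w ^ (n - k) * Complex.exp (-(ν : ℂ) * z * w)))
      = ((-1 : ℂ)^(m + n) * (-1 : ℂ)^n * (-1 : ℂ)^(m - k)) *
        (Complex.exp ((ν : ℂ) * z * w) * Complex.exp (-(ν : ℂ) * z * w)) *
        ((m.choose k : ℂ) * (n.descFactorial k : ℂ) * ((ν : ℂ)^n * (ν : ℂ)^(m - k))
          * z ^ (m - k) * w ^ (n - k)) := by
        rw [neg_mul, neg_pow ((ν : ℂ) * z), mul_pow, neg_pow (ν : ℂ)]
        ring
    _ = (-1 : ℂ)^k * (m.choose k : ℂ) * (n.descFactorial k : ℂ)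
          * (ν : ℂ)^(m + n - k) * z^(m - k) * w^(n - k) := by
        rw [hparity, hexp, hν, pow_add]
        ring

set_option maxHeartbeats 1600000 in
theorem complexHermite_exponential_generating_function (ν : ℝ) (hν : 0 < ν) (u v z : ℂ) :
    HasSum (fun p : ℕ × ℕ =>
        u^p.1 * v^p.2 / ((p.1.factorial : ℂ) * (p.2.factorial : ℂ))
          * complexHermite ν p.1 p.2 z (starRingEnd ℂ z))
      (Complex.exp ((ν : ℂ) * (u * z + v * (starRingEnd ℂ z) - u * v))) := by
  set w : ℂ := starRingEnd ℂ z with hw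
  set x₁ : ℂ := (ν : ℂ) * u * z with hx₁
  set x₂ : ℂ := (ν : ℂ) * v * w with hx₂
  set x₃ : ℂ := -((ν : ℂ) * u * v) with hx₃
  have E1 := CH.hasSum_exp x₁
  have E2 := CH.hasSum_exp x₂
  have E3 := CH.hasSum_exp x₃
  have S12 : Summable (fun p : ℕ × ℕ =>
      (x₁ ^ p.1 / (p.1.factorial : ℂ)) * (x₂ ^ p.2 / (p.2.factorial : ℂ))) := by
    apply summable_mul_of_summable_norm (CH.summable_norm_exp x₁) (CH.summable_norm_exp x₂)
  have h12 : HasSum (fun p : ℕ × ℕ =>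
      (x₁ ^ p.1 / (p.1.factorial : ℂ)) * (x₂ ^ p.2 / (p.2.factorial : ℂ)))
      (Complex.exp x₁ * Complex.exp x₂) :=
    HasSum.mul (f := fun n : ℕ => x₁ ^ n / (n.factorial : ℂ))
      (g := fun n : ℕ => x₂ ^ n / (n.factorial : ℂ)) E1 E2 S12
  have S123 : Summable (fun q : (ℕ × ℕ) × ℕ =>
      ((x₁ ^ q.1.1 / (q.1.1.factorial : ℂ)) * (x₂ ^ q.1.2 / (q.1.2.factorial : ℂ)))
        * (x₃ ^ q.2 / (q.2.factorial : ℂ))) := by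
    apply summable_mul_of_summable_norm
      ((CH.summable_norm_exp x₁).mul_norm (CH.summable_norm_exp x₂))
      (CH.summable_norm_exp x₃)
  have h123 : HasSum (fun q : (ℕ × ℕ) × ℕ =>
      ((x₁ ^ q.1.1 / (q.1.1.factorial : ℂ)) * (x₂ ^ q.1.2 / (q.1.2.factorial : ℂ)))
        * (x₃ ^ q.2 / (q.2.factorial : ℂ)))
      (Complex.exp x₁ * Complex.exp x₂ * Complex.exp x₃) :=
    HasSum.mul
      (f := fun p : ℕ × ℕ => (x₁ ^ p.1 / (p.1.factorial : ℂ)) * (x₂ ^ p.2 / (p.2.factorial : ℂ)))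
      (g := fun n : ℕ => x₃ ^ n / (n.factorial : ℂ)) h12 E3 S123
  -- reindexing
  set F : (ℕ × ℕ) × ℕ → ℂ := fun q =>
    if q.2 ≤ q.1.1 ∧ q.2 ≤ q.1.2 then
      (x₁ ^ (q.1.1 - q.2) / ((q.1.1 - q.2).factorial : ℂ))
        * (x₂ ^ (q.1.2 - q.2) / ((q.1.2 - q.2).factorial : ℂ))
        * (x₃ ^ q.2 / (q.2.factorial : ℂ))
    else 0 with hF
  set i : (ℕ × ℕ) × ℕ → (ℕ × ℕ) × ℕ := fun q => ((q.1.1 + q.2, q.1.2 + q.2), q.2) with hi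
  have hinj : Function.Injective i := by
    rintro ⟨⟨a, b⟩, c⟩ ⟨⟨a', b'⟩, c'⟩ h
    simp only [hi, Prod.mk.injEq] at h
    obtain ⟨⟨h1, h2⟩, h3⟩ := h
    subst h3
    simp only [Nat.add_right_cancel_iff] at h1 h2
    simp [h1, h2]
  have hrange : ∀ q ∉ Set.range i, F q = 0 := by
    rintro ⟨⟨m, n⟩, k⟩ hq
    rw [hF]
    simp only
    rw [if_neg]
    intro ⟨hkm, hkn⟩
    exact hq ⟨((m - k, n - k), k), by
      simp [hi, Nat.sub_add_cancel hkm, Nat.sub_add_cancel hkn]⟩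
  have hcomp : F ∘ i = fun q : (ℕ × ℕ) × ℕ =>
      ((x₁ ^ q.1.1 / (q.1.1.factorial : ℂ)) * (x₂ ^ q.1.2 / (q.1.2.factorial : ℂ)))
        * (x₃ ^ q.2 / (q.2.factorial : ℂ)) := by
    funext ⟨⟨a, b⟩, c⟩
    simp only [Function.comp_apply, hF, hi]
    rw [if_pos ⟨Nat.le_add_left c a, Nat.le_add_left c b⟩]
    simp [Nat.add_sub_cancel]
  have hFsum : HasSum F (Complex.exp x₁ * Complex.exp x₂ * Complex.exp x₃) := by
    rw [← hinj.hasSum_iff hrange, hcomp]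
    exact h123
  -- fiberwise
  have hfiber : ∀ p : ℕ × ℕ, HasSum (fun k => F (p, k))
      (u^p.1 * v^p.2 / ((p.1.factorial : ℂ) * (p.2.factorial : ℂ))
        * complexHermite ν p.1 p.2 z w) := by
    rintro ⟨m, n⟩
    have hzero : ∀ k ∉ range (m + 1), F ((m, n), k) = 0 := by
      intro k hk
      rw [hF]
      simp only
      rw [if_neg]
      rintro ⟨hkm, -⟩
      exact hk (Finset.mem_range.mpr (Nat.lt_succ_of_le hkm))
    have hs := hasSum_sum_of_ne_finset_zero (L := SummationFilter.unconditional ℕ) hzero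
    convert hs using 1
    rw [CH.complexHermite_eq ν m n z w, Finset.mul_sum]
    refine Finset.sum_congr rfl (fun k hk => ?_)
    have hkm : k ≤ m := Nat.lt_succ_iff.mp (Finset.mem_range.mp hk)
    rw [hF]
    simp only
    by_cases hkn : k ≤ n
    · rw [if_pos ⟨hkm, hkn⟩]
      have hmfac : ((m.factorial : ℂ)) = (m.choose k : ℂ) * (k.factorial : ℂ)
          * ((m - k).factorial : ℂ) := by
        rw [← Nat.cast_mul, ← Nat.cast_mul, Nat.choose_mul_factorial_mul_factorial hkm]
      have hnfac : ((n.factorial : ℂ)) = ((n - k).factorial : ℂ) * (n.descFactorial k : ℂ) := by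
        rw [← Nat.cast_mul, Nat.factorial_mul_descFactorial hkn]
      have hu : u ^ m = u ^ (m - k) * u ^ k := by
        rw [← pow_add, Nat.sub_add_cancel hkm]
      have hv : v ^ n = v ^ (n - k) * v ^ k := by
        rw [← pow_add, Nat.sub_add_cancel hkn]
      have hνe : ((ν : ℂ)) ^ (m + n - k) = (ν : ℂ) ^ (m - k) * (ν : ℂ) ^ (n - k)
          * (ν : ℂ) ^ k := by
        rw [← pow_add, ← pow_add]
        congr 1
        omega
      have hc1 : ((m.choose k : ℂ)) ≠ 0 := Nat.cast_ne_zero.mpr (Nat.choose_pos hkm).ne'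
      have hc2 : ((n.descFactorial k : ℂ)) ≠ 0 := Nat.cast_ne_zero.mpr
        (by rw [Ne, Nat.descFactorial_eq_zero_iff_lt]; omega)
      have hfk : (k.factorial : ℂ) ≠ 0 := Nat.cast_ne_zero.mpr k.factorial_ne_zero
      have hfm : ((m - k).factorial : ℂ) ≠ 0 := Nat.cast_ne_zero.mpr (m - k).factorial_ne_zero
      have hfn : ((n - k).factorial : ℂ) ≠ 0 := Nat.cast_ne_zero.mpr (n - k).factorial_ne_zero
      rw [hmfac, hnfac, hu, hv, hνe]
      have hx₃ : x₃ ^ k = (-1 : ℂ)^k * (ν : ℂ)^k * u^k * v^k := by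
        simp only [x₃]
        rw [show -((ν : ℂ) * u * v) = (-1 : ℂ) * ((ν : ℂ) * u * v) by ring, mul_pow, mul_pow,
          mul_pow]
        ring
      rw [hx₃]
      simp only [x₁, x₂, mul_pow]
      field_simp
    · rw [if_neg (by tauto)]
      rw [Nat.descFactorial_eq_zero_iff_lt.mpr (by omega)]
      simp
  have hmain := hFsum.prod_fiberwise hfiber
  have hval : Complex.exp x₁ * Complex.exp x₂ * Complex.exp x₃
      = Complex.exp ((ν : ℂ) * (u * z + v * w - u * v)) := by
    rw [← Complex.exp_add, ← Complex.exp_add]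
    congr 1
    rw [hx₁, hx₂, hx₃]
    ring
  rw [hval] at hmain
  exact hmain
end

section
/- The univariate complex Hermite polynomials satisfy the single-index generating function ∑_{k=0}^∞ (u^k/k!) H_{k,n}^ν(z, z̄) = ν^n (z̄ - u)^n exp(ν u z) for every natural n, complex u, z, and ν > 0. -/
theorem complexHermite_single_generating_function (ν : ℝ) (hν : 0 < ν) (n : ℕ) (u z : ℂ) :
    HasSum (fun k : ℕ => u^k / (k.factorial : ℂ) * complexHermite ν k n z (starRingEnd ℂ z))
      ((ν : ℂ)^n * ((starRingEnd ℂ z) - u)^n * Complex.exp ((ν : ℂ) * u * z)) := by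
  set w := starRingEnd ℂ z with hw
  set g : ℂ → ℂ := fun w' => (-(ν : ℂ) * w')^n * Complex.exp (-(ν : ℂ) * z * w') with hg
  have hinner : (fun w' => iteratedDeriv n (fun z' => Complex.exp (-(ν : ℂ) * z' * w')) z) = g := by
    funext w'
    have : (fun z' => Complex.exp (-(ν : ℂ) * z' * w')) =
        (fun z' => Complex.exp ((-(ν : ℂ) * w') * z')) := by
      funext z'; ring_nf
    rw [this, iteratedDeriv_cexp_const_mul]
    simp only [hg]
    ring_nf
  have hgdiff : Differentiable ℂ g := by
    apply Differentiable.mul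
    · exact (differentiable_const _ |>.mul differentiable_id).pow n
    · exact (differentiable_const _ |>.mul differentiable_id).cexp
  have htaylor := Complex.hasSum_taylorSeries_of_entire hgdiff w (w - u)
  have h2 := htaylor.mul_left ((-1 : ℂ)^n * Complex.exp ((ν : ℂ) * z * w))
  convert h2 using 1
  · rfl
  · funext k
    simp only [complexHermite, hinner, smul_eq_mul]
    have h0 : (w - u - w) = -u := by ring
    rw [h0, neg_pow u k]
    have hfact : ((k.factorial : ℂ)) ≠ 0 := Nat.cast_ne_zero.mpr k.factorial_ne_zero
    field_simp
    ring
  · show _ = _ * _ * g (w - u)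
    simp only [hg]
    rw [show (-(ν : ℂ) * z * (w - u)) = (ν : ℂ) * u * z + (-((ν : ℂ) * z * w)) by ring,
      Complex.exp_add, Complex.exp_neg,
      show (-(ν : ℂ) * (w - u)) = (-1 : ℂ) * ((ν : ℂ) * (w - u)) by ring,
      mul_pow, mul_pow]
    have hexp : Complex.exp ((ν : ℂ) * z * w) ≠ 0 := Complex.exp_ne_zero _
    have hs : ((-1 : ℂ))^n * ((-1 : ℂ))^n = 1 := by rw [← mul_pow]; norm_num
    field_simp
    ring_nf
    rw [mul_comm n 2, pow_mul]
    norm_num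
end

section
/- For ν > 0, natural m, and z ∈ ℂ: ∑_{n=0}^∞ |H_{m,n}^ν(z, z̄)|² / (n! νⁿ) = m! ν^m exp(ν |z|²). -/
open Finset

noncomputable def hPoly (ν : ℝ) (m n : ℕ) (z w : ℂ) : ℂ :=
  ∑ k ∈ range (m + 1), (-1 : ℂ) ^ k * (m.choose k : ℂ) * (n.descFactorial k : ℂ) *
    (ν : ℂ) ^ (m + n - k) * z ^ (m - k) * w ^ (n - k)

lemma iteratedDeriv_pow_mul_cexp (b c : ℂ) (n : ℕ) : ∀ (m : ℕ) (x : ℂ),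
    iteratedDeriv m (fun y => (c * y) ^ n * Complex.exp (b * y)) x
      = ∑ k ∈ range (m + 1), (m.choose k : ℂ) * (n.descFactorial k : ℂ) * c ^ k *
          (c * x) ^ (n - k) * b ^ (m - k) * Complex.exp (b * x) := by
  intro m
  induction m with
  | zero => intro x; simp
  | succ m ih =>
    intro x
    rw [iteratedDeriv_succ, funext ih]
    set T : ℕ → ℂ := fun k => (n.descFactorial k : ℂ) * c ^ k * (c * x) ^ (n - k) *
        b ^ (m + 1 - k) * Complex.exp (b * x) with hT
    have hderiv : HasDerivAt (fun y : ℂ => ∑ k ∈ range (m + 1),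
        (m.choose k : ℂ) * (n.descFactorial k : ℂ) * c ^ k * (c * y) ^ (n - k) * b ^ (m - k) *
          Complex.exp (b * y))
        (∑ k ∈ range (m + 1), (m.choose k : ℂ) * (T (k + 1) + T k)) x := by
      have : ∀ k ∈ range (m + 1), HasDerivAt (fun y : ℂ =>
          (m.choose k : ℂ) * (n.descFactorial k : ℂ) * c ^ k * (c * y) ^ (n - k) * b ^ (m - k) *
            Complex.exp (b * y)) ((m.choose k : ℂ) * (T (k + 1) + T k)) x := by
        intro k hk
        simp only [Finset.mem_range] at hk
        have h1 : HasDerivAt (fun y : ℂ => (c * y) ^ (n - k))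
            (((n - k : ℕ) : ℂ) * (c * x) ^ (n - k - 1) * (c * 1)) x :=
          ((hasDerivAt_id x).const_mul c).pow _
        have h2 : HasDerivAt (fun y : ℂ => Complex.exp (b * y))
            (Complex.exp (b * x) * (b * 1)) x := ((hasDerivAt_id x).const_mul b).cexp
        have h3 := (h1.mul h2).const_mul
          ((m.choose k : ℂ) * (n.descFactorial k : ℂ) * c ^ k * b ^ (m - k))
        simp only [Pi.mul_apply] at h3
        convert h3 using 1
        · rfl
        · rfl
        · ext y; ring
        · have hd : ((n.descFactorial (k + 1) : ℕ) : ℂ)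
              = ((n - k : ℕ) : ℂ) * (n.descFactorial k : ℂ) := by
            rw [Nat.descFactorial_succ]; push_cast; ring
          have hb : m + 1 - (k + 1) = m - k := by omega
          have hb2 : n - k - 1 = n - (k + 1) := by omega
          have hb3 : m + 1 - k = (m - k) + 1 := by omega
          simp only [T, hd, hb, hb2, hb3, pow_succ]
          ring
      exact HasDerivAt.fun_sum this
    rw [hderiv.deriv]
    have key : ∑ k ∈ range (m + 2), ((m + 1).choose k : ℂ) * T k
        = ∑ k ∈ range (m + 1), (m.choose k : ℂ) * (T (k + 1) + T k) := by
      rw [Finset.sum_range_succ' (fun k => ((m + 1).choose k : ℂ) * T k)]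
      have e1 : ∀ k, ((m + 1).choose (k + 1) : ℂ) = (m.choose k : ℂ) + (m.choose (k + 1) : ℂ) := by
        intro k; rw [Nat.choose_succ_succ]; push_cast; ring
      simp only [e1, add_mul]
      rw [Finset.sum_add_distrib]
      have e2 : ∑ k ∈ range (m + 1), (m.choose (k + 1) : ℂ) * T (k + 1)
          + ((m + 1).choose 0 : ℂ) * T 0 = ∑ k ∈ range (m + 1), (m.choose k : ℂ) * T k := by
        rw [show ((m + 1).choose 0 : ℂ) * T 0 = (m.choose 0 : ℂ) * T 0 by simp]
        rw [← Finset.sum_range_succ' (fun k => (m.choose k : ℂ) * T k)]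
        rw [Finset.sum_range_succ]
        simp [Nat.choose_succ_self]
      rw [add_assoc, e2]
      simp [mul_add, Finset.sum_add_distrib]
    rw [← key]
    apply Finset.sum_congr rfl
    intro k hk
    simp only [hT]
    ring

lemma complexHermite_eq_hPoly (ν : ℝ) (m n : ℕ) (z w : ℂ) :
    complexHermite ν m n z w = hPoly ν m n z w := by
  have hin : (fun w' : ℂ => iteratedDeriv n (fun z' => Complex.exp (-(ν : ℂ) * z' * w')) z)
      = fun w' => ((-(ν : ℂ)) * w') ^ n * Complex.exp ((-(ν : ℂ) * z) * w') := by
    funext w'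
    have : (fun z' : ℂ => Complex.exp (-(ν : ℂ) * z' * w'))
        = fun z' => Complex.exp ((-(ν : ℂ) * w') * z') := by
      funext z'; ring_nf
    rw [this, iteratedDeriv_cexp_const_mul]
    ring_nf
  rw [complexHermite, hin, iteratedDeriv_pow_mul_cexp (-(ν : ℂ) * z) (-(ν : ℂ)) n m w,
    Finset.mul_sum, hPoly]
  apply Finset.sum_congr rfl
  intro k hk
  simp only [Finset.mem_range] at hk
  have hkm : k ≤ m := by omega
  rcases le_or_gt k n with hkn | hkn
  · obtain ⟨a, rfl⟩ := Nat.exists_eq_add_of_le hkm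
    obtain ⟨e, rfl⟩ := Nat.exists_eq_add_of_le hkn
    have h1 : k + a - k = a := by omega
    have h2 : k + e - k = e := by omega
    have h3 : k + a + (k + e) - k = a + e + k := by omega
    have h4 : k + a + (k + e) = a + e + 2 * k := by omega
    rw [h1, h2, h3, h4]
    have hexp : Complex.exp ((ν : ℂ) * z * w) * Complex.exp (-(ν : ℂ) * z * w) = 1 := by
      rw [← Complex.exp_add, show (ν : ℂ) * z * w + -(ν : ℂ) * z * w = 0 by ring,
        Complex.exp_zero]
    have hX : (-1 : ℂ) ^ a * (-1) ^ a = 1 := by rw [← mul_pow]; norm_num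
    have hY : (-1 : ℂ) ^ e * (-1) ^ e = 1 := by rw [← mul_pow]; norm_num
    rw [show ((-1 : ℂ)) ^ (a + e + 2 * k) = (-1) ^ a * (-1) ^ e by
      rw [pow_add, pow_add, pow_mul]; norm_num]
    rw [show (-(ν : ℂ)) ^ k = (-1) ^ k * (ν : ℂ) ^ k by
        rw [show (-(ν : ℂ)) = -1 * (ν : ℂ) by ring, mul_pow],
      show (-(ν : ℂ) * w) ^ e = (-1) ^ e * ((ν : ℂ) ^ e * w ^ e) by
        rw [show (-(ν : ℂ) * w) = -1 * ((ν : ℂ) * w) by ring, mul_pow, mul_pow],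
      show (-(ν : ℂ) * z) ^ a = (-1) ^ a * ((ν : ℂ) ^ a * z ^ a) by
        rw [show (-(ν : ℂ) * z) = -1 * ((ν : ℂ) * z) by ring, mul_pow, mul_pow]]
    set R : ℂ := (-1 : ℂ) ^ k * ((k + a).choose k : ℂ) * ((k + e).descFactorial k : ℂ) *
      (ν : ℂ) ^ (a + e + k) * z ^ a * w ^ e with hR
    linear_combination (R * ((-1 : ℂ) ^ a * (-1) ^ a) * ((-1 : ℂ) ^ e * (-1) ^ e)) * hexp
      + (R * ((-1 : ℂ) ^ a * (-1) ^ a)) * hY + R * hX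
  · have hd : (n.descFactorial k : ℂ) = 0 := by
      norm_cast
      exact Nat.descFactorial_eq_zero_iff_lt.mpr hkn
    rw [hd]
    ring

lemma pascal_sum (m : ℕ) (T : ℕ → ℂ) :
    ∑ k ∈ range (m + 2), ((m + 1).choose k : ℂ) * T k
      = ∑ k ∈ range (m + 1), (m.choose k : ℂ) * (T (k + 1) + T k) := by
  rw [Finset.sum_range_succ' (fun k => ((m + 1).choose k : ℂ) * T k)]
  have e1 : ∀ k, ((m + 1).choose (k + 1) : ℂ) = (m.choose k : ℂ) + (m.choose (k + 1) : ℂ) := by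
    intro k; rw [Nat.choose_succ_succ]; push_cast; ring
  simp only [e1, add_mul]
  rw [Finset.sum_add_distrib]
  have e2 : ∑ k ∈ range (m + 1), (m.choose (k + 1) : ℂ) * T (k + 1)
      + ((m + 1).choose 0 : ℂ) * T 0 = ∑ k ∈ range (m + 1), (m.choose k : ℂ) * T k := by
    rw [show ((m + 1).choose 0 : ℂ) * T 0 = (m.choose 0 : ℂ) * T 0 by simp]
    rw [← Finset.sum_range_succ' (fun k => (m.choose k : ℂ) * T k), Finset.sum_range_succ]
    simp [Nat.choose_succ_self]
  rw [add_assoc, e2]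
  simp [mul_add, Finset.sum_add_distrib]

lemma hPoly_symm (ν : ℝ) (m n : ℕ) (z w : ℂ) : hPoly ν m n z w = hPoly ν n m w z := by
  have key : ∀ (p q : ℕ) (u v : ℂ), hPoly ν p q u v
      = ∑ k ∈ range (p + q + 1), (-1 : ℂ) ^ k * (k.factorial : ℂ) * (p.choose k : ℂ) *
          (q.choose k : ℂ) * (ν : ℂ) ^ (p + q - k) * u ^ (p - k) * v ^ (q - k) := by
    intro p q u v
    rw [hPoly]
    rw [Finset.sum_subset (by intro k hk; simp only [mem_range] at *; omega :
      range (p + 1) ⊆ range (p + q + 1))]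
    · apply Finset.sum_congr rfl
      intro k _
      rw [Nat.descFactorial_eq_factorial_mul_choose]
      push_cast; ring
    · intro k _ hk
      simp only [mem_range, not_lt] at hk
      have : (p.choose k : ℂ) = 0 := by
        norm_cast; exact Nat.choose_eq_zero_of_lt (by omega)
      rw [this]; ring
  rw [key, key]
  rw [show n + m + 1 = m + n + 1 by omega]
  apply Finset.sum_congr rfl
  intro k _
  rw [show n + m - k = m + n - k by omega]
  ring

lemma hPoly_conj (ν : ℝ) (m n : ℕ) (z w : ℂ) :
    (starRingEnd ℂ) (hPoly ν m n z w)
      = hPoly ν m n ((starRingEnd ℂ) z) ((starRingEnd ℂ) w) := by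
  simp only [hPoly, map_sum, map_mul, map_pow, map_neg, map_one, Complex.conj_ofReal,
    map_natCast]

lemma hPoly_zero_right (ν : ℝ) (m : ℕ) (z w : ℂ) : hPoly ν m 0 z w = (ν : ℂ) ^ m * z ^ m := by
  rw [hPoly, Finset.sum_eq_single 0]
  · simp
  · intro k _ hk
    obtain ⟨j, rfl⟩ := Nat.exists_eq_succ_of_ne_zero hk
    simp [Nat.zero_descFactorial_succ]
  · simp

lemma hPoly_zero_left (ν : ℝ) (n : ℕ) (z w : ℂ) : hPoly ν 0 n z w = (ν : ℂ) ^ n * w ^ n := by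
  rw [hPoly_symm, hPoly_zero_right]

lemma hPoly_rec_left (ν : ℝ) (m n : ℕ) (z w : ℂ) :
    hPoly ν (m + 1) n z w
      = (ν : ℂ) * z * hPoly ν m n z w - (ν : ℂ) * (n : ℂ) * hPoly ν m (n - 1) z w := by
  rcases n with _ | n'
  · simp only [Nat.cast_zero, mul_zero, zero_mul, sub_zero]
    rw [hPoly_zero_right, hPoly_zero_right]
    ring
  · set n := n' + 1 with hn
    set S : ℕ → ℂ := fun k => (-1 : ℂ) ^ k * (n.descFactorial k : ℂ) *
        (ν : ℂ) ^ (m + 1 + n - k) * z ^ (m + 1 - k) * w ^ (n - k) with hS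
    have lhs_eq : hPoly ν (m + 1) n z w = ∑ k ∈ range (m + 2), ((m + 1).choose k : ℂ) * S k := by
      rw [hPoly]
      apply Finset.sum_congr rfl
      intro k _
      simp only [hS]; ring
    rw [lhs_eq, pascal_sum]
    rw [hPoly, hPoly, Finset.mul_sum, Finset.mul_sum, ← Finset.sum_sub_distrib]
    apply Finset.sum_congr rfl
    intro k hk
    simp only [mem_range] at hk
    have hkm : k ≤ m := by omega
    have h1 : m + 1 + n - k = (m + n - k) + 1 := by omega
    have h2 : m + 1 - k = (m - k) + 1 := by omega
    have h3 : m + 1 + n - (k + 1) = (m + (n - 1) - k) + 1 := by omega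
    have h4 : m + 1 - (k + 1) = m - k := by omega
    have h5 : n - (k + 1) = (n - 1) - k := by omega
    have h6 : ((n.descFactorial (k + 1) : ℕ) : ℂ)
        = (n : ℂ) * ((n - 1).descFactorial k : ℂ) := by
      rw [hn, Nat.succ_descFactorial_succ]
      push_cast; simp
    simp only [hS, h1, h2, h3, h4, h5, h6, pow_succ]
    ring
  
lemma hPoly_rec_right (ν : ℝ) (m n : ℕ) (z w : ℂ) :
    hPoly ν m (n + 1) z w
      = (ν : ℂ) * w * hPoly ν m n z w - (ν : ℂ) * (m : ℂ) * hPoly ν (m - 1) n z w := by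
  rw [hPoly_symm, hPoly_rec_left, hPoly_symm ν n m, hPoly_symm ν n (m-1)]

lemma hasSum_descFactorial_cexp (k : ℕ) (y : ℂ) :
    HasSum (fun n : ℕ => (n.descFactorial k : ℂ) * y ^ (n - k) / (n.factorial : ℂ))
      (Complex.exp y) := by
  have h0 : HasSum (fun n : ℕ => y ^ n / (n.factorial : ℂ)) (Complex.exp y) := by
    rw [Complex.exp_eq_exp_ℂ]
    exact NormedSpace.expSeries_div_hasSum_exp y
  rw [← hasSum_nat_add_iff' k]
  have hz : ∑ i ∈ range k, (i.descFactorial k : ℂ) * y ^ (i - k) / (i.factorial : ℂ) = 0 := by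
    apply Finset.sum_eq_zero
    intro i hi
    simp only [mem_range] at hi
    rw [show ((i.descFactorial k : ℕ) : ℂ) = 0 by
      norm_cast; exact Nat.descFactorial_eq_zero_iff_lt.mpr hi]
    ring
  rw [hz, sub_zero]
  have heq : (fun n : ℕ => ((n + k).descFactorial k : ℂ) * y ^ (n + k - k) /
      ((n + k).factorial : ℂ)) = fun n : ℕ => y ^ n / (n.factorial : ℂ) := by
    funext n
    clear hz h0
    have hd : (n + k).descFactorial k * n.factorial = (n + k).factorial := by
      induction k with
      | zero => simp
      | succ k ihk =>
        have : n + (k + 1) = (n + k) + 1 := by omega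
        rw [this, Nat.succ_descFactorial_succ, Nat.factorial_succ, Nat.mul_assoc, ihk]
    have hnc : ((n + k).descFactorial k : ℂ) * (n.factorial : ℂ) = ((n + k).factorial : ℂ) := by
      norm_cast
    rw [show n + k - k = n by omega]
    rw [div_eq_div_iff (Nat.cast_ne_zero.mpr (Nat.factorial_ne_zero _))
      (Nat.cast_ne_zero.mpr (Nat.factorial_ne_zero _))]
    rw [mul_comm ((n + k).descFactorial k : ℂ) (y ^ n), mul_assoc, hnc]
  rw [heq]
  exact h0

lemma hasSum_hPoly_base (ν : ℝ) (hν : ν ≠ 0) (z : ℂ) (m' : ℕ) :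
    HasSum (fun n : ℕ => hPoly ν 0 n z (starRingEnd ℂ z) *
        (starRingEnd ℂ) (hPoly ν m' n z (starRingEnd ℂ z)) / ((n.factorial : ℂ) * (ν : ℂ) ^ n))
      (if 0 = m' then Complex.exp (((ν * Complex.normSq z : ℝ)) : ℂ) else 0) := by
  set y : ℂ := ((ν * Complex.normSq z : ℝ) : ℂ) with hy
  have hy' : y = (ν : ℂ) * (z * (starRingEnd ℂ) z) := by
    rw [Complex.mul_conj, hy]; push_cast; ring
  set c : ℕ → ℂ := fun k => (-1 : ℂ) ^ k * (m'.choose k : ℂ) * (ν : ℂ) ^ m' *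
      ((starRingEnd ℂ) z) ^ m' with hc
  have H : HasSum (fun n : ℕ => ∑ k ∈ range (m' + 1),
        c k * ((n.descFactorial k : ℂ) * y ^ (n - k) / (n.factorial : ℂ)))
      (∑ k ∈ range (m' + 1), c k * Complex.exp y) :=
    hasSum_sum (fun k _ => (hasSum_descFactorial_cexp k y).mul_left (c k))
  have heq : (fun n : ℕ => hPoly ν 0 n z (starRingEnd ℂ z) *
        (starRingEnd ℂ) (hPoly ν m' n z (starRingEnd ℂ z)) / ((n.factorial : ℂ) * (ν : ℂ) ^ n))
      = fun n : ℕ => ∑ k ∈ range (m' + 1),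
        c k * ((n.descFactorial k : ℂ) * y ^ (n - k) / (n.factorial : ℂ)) := by
    funext n
    rw [hPoly_zero_left, hPoly_conj, Complex.conj_conj, hPoly_symm ν m' n _ z,
      hPoly_symm ν n m' z _, hPoly]
    rw [Finset.mul_sum, Finset.sum_div]
    apply Finset.sum_congr rfl
    intro k hk
    simp only [mem_range] at hk
    obtain ⟨a, rfl⟩ := Nat.exists_eq_add_of_le (show k ≤ m' by omega)
    rcases le_or_gt k n with hkn | hkn
    · obtain ⟨e, rfl⟩ := Nat.exists_eq_add_of_le hkn
      have h1 : k + e - k = e := by omega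
      have h2 : k + a + (k + e) - k = k + a + e := by omega
      have h3 : k + a - k = a := by omega
      rw [h1, h2, h3, hc, hy', mul_pow, mul_pow]
      have hfac : ((k + e).factorial : ℂ) ≠ 0 := Nat.cast_ne_zero.mpr (Nat.factorial_ne_zero _)
      have hνC : (ν : ℂ) ≠ 0 := by exact_mod_cast Complex.ofReal_ne_zero.mpr hν
      field_simp
      ring
    · rw [show ((n.descFactorial k : ℕ) : ℂ) = 0 by
        norm_cast; exact Nat.descFactorial_eq_zero_iff_lt.mpr hkn]
      ring
  rw [heq]
  by_cases hm : m' = 0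
  · subst hm
    simpa [hc] using H
  · have hzero : ∑ k ∈ range (m' + 1), c k * Complex.exp y = 0 := by
      have hfact : ∑ k ∈ range (m' + 1), c k * Complex.exp y
          = (∑ k ∈ range (m' + 1), (-1 : ℂ) ^ k * (m'.choose k : ℂ)) *
            ((ν : ℂ) ^ m' * ((starRingEnd ℂ) z) ^ m' * Complex.exp y) := by
        rw [Finset.sum_mul]
        apply Finset.sum_congr rfl
        intro k _
        rw [hc]; ring
      have halt : (∑ k ∈ range (m' + 1), (-1 : ℂ) ^ k * (m'.choose k : ℂ)) = 0 := by
        have h := Int.alternating_sum_range_choose_of_ne hm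
        calc (∑ k ∈ range (m' + 1), (-1 : ℂ) ^ k * (m'.choose k : ℂ))
            = ((∑ i ∈ range (m' + 1), (-1 : ℤ) ^ i * (m'.choose i : ℤ) : ℤ) : ℂ) := by
              push_cast; rfl
          _ = 0 := by rw [h]; simp
      rw [hfact, halt, zero_mul]
    rw [if_neg (by omega), ← hzero]
    exact H

lemma hasSum_hPoly_mul_conj (ν : ℝ) (hν : ν ≠ 0) (z : ℂ) :
    ∀ m m' : ℕ, HasSum (fun n : ℕ => hPoly ν m n z (starRingEnd ℂ z) *
        (starRingEnd ℂ) (hPoly ν m' n z (starRingEnd ℂ z)) / ((n.factorial : ℂ) * (ν : ℂ) ^ n))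
      (if m = m' then (m.factorial : ℂ) * (ν : ℂ) ^ m *
          Complex.exp (((ν * Complex.normSq z : ℝ)) : ℂ) else 0) := by
  intro m
  induction m with
  | zero =>
    intro m'
    simpa using hasSum_hPoly_base ν hν z m'
  | succ m ih =>
    intro m'
    have hνC : (ν : ℂ) ≠ 0 := Complex.ofReal_ne_zero.mpr hν
    set E : ℂ := Complex.exp (((ν * Complex.normSq z : ℝ)) : ℂ) with hE
    set w : ℂ := (starRingEnd ℂ) z with hw
    have IH1 := ih m'
    have IH2 := ih (m' - 1)
    set g : ℕ → ℂ := fun n => (ν : ℂ) * (n : ℂ) * hPoly ν m (n - 1) z w *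
        (starRingEnd ℂ) (hPoly ν m' n z w) / ((n.factorial : ℂ) * (ν : ℂ) ^ n) with hg
    have hg0 : g 0 = 0 := by simp [hg]
    have hgsucc : ∀ k : ℕ, g (k + 1)
        = (ν : ℂ) * z * (hPoly ν m k z w * (starRingEnd ℂ) (hPoly ν m' k z w) /
            ((k.factorial : ℂ) * (ν : ℂ) ^ k))
          - (ν : ℂ) * (m' : ℂ) * (hPoly ν m k z w * (starRingEnd ℂ) (hPoly ν (m' - 1) k z w) /
            ((k.factorial : ℂ) * (ν : ℂ) ^ k)) := by
      intro k
      have hr := congrArg (starRingEnd ℂ) (hPoly_rec_right ν m' k z w)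
      simp only [map_sub, map_mul, Complex.conj_ofReal, map_natCast, hw,
        Complex.conj_conj] at hr
      rw [← hw] at hr
      simp only [hg, hr]
      have hfac : ((k + 1).factorial : ℂ) = ((k : ℂ) + 1) * (k.factorial : ℂ) := by
        rw [Nat.factorial_succ]; push_cast; ring
      have hfk : (k.factorial : ℂ) ≠ 0 := Nat.cast_ne_zero.mpr (Nat.factorial_ne_zero _)
      have hk1 : ((k : ℂ) + 1) ≠ 0 := by
        have : ((k : ℂ) + 1) = ((k + 1 : ℕ) : ℂ) := by push_cast; ring
        rw [this]
        exact Nat.cast_ne_zero.mpr (Nat.succ_ne_zero k)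
      rw [Nat.add_sub_cancel, hfac]
      push_cast
      field_simp
      ring
    have hgsum : HasSum (fun k => g (k + 1))
        ((ν : ℂ) * z * (if m = m' then (m.factorial : ℂ) * (ν : ℂ) ^ m * E else 0)
          - (ν : ℂ) * (m' : ℂ) * (if m = m' - 1 then (m.factorial : ℂ) * (ν : ℂ) ^ m * E else 0)) := by
      have h := (IH1.mul_left ((ν : ℂ) * z)).sub (IH2.mul_left ((ν : ℂ) * (m' : ℂ)))
      rw [funext hgsucc]
      exact h
    have hgfull : HasSum g
        ((ν : ℂ) * z * (if m = m' then (m.factorial : ℂ) * (ν : ℂ) ^ m * E else 0)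
          - (ν : ℂ) * (m' : ℂ) * (if m = m' - 1 then (m.factorial : ℂ) * (ν : ℂ) ^ m * E else 0)) := by
      refine (hasSum_nat_add_iff' (f := g) 1).mp ?_
      simpa [hg0] using hgsum
    have hmain := (IH1.mul_left ((ν : ℂ) * z)).sub hgfull
    have heq : (fun n : ℕ => hPoly ν (m + 1) n z w * (starRingEnd ℂ) (hPoly ν m' n z w) /
        ((n.factorial : ℂ) * (ν : ℂ) ^ n))
        = fun n : ℕ => (ν : ℂ) * z * (hPoly ν m n z w * (starRingEnd ℂ) (hPoly ν m' n z w) /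
            ((n.factorial : ℂ) * (ν : ℂ) ^ n)) - g n := by
      funext n
      rw [hPoly_rec_left, hg]
      ring
    rw [heq]
    convert hmain using 1
    · rfl
    rw [show ∀ a b : ℂ, a - (a - b) = b from fun a b => by ring]
    rcases m' with _ | j
    · simp
    · simp only [Nat.succ_sub_one]
      by_cases hmj : m = j
      · subst hmj
        rw [if_pos rfl, if_pos rfl]
        rw [Nat.factorial_succ]
        push_cast
        ring
      · rw [if_neg hmj, if_neg (by omega), mul_zero]

theorem complexHermite_norm_sum (ν : ℝ) (hν : 0 < ν) (m : ℕ) (z : ℂ) :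
    HasSum (fun n : ℕ => ‖complexHermite ν m n z (starRingEnd ℂ z)‖^2
        / ((n.factorial : ℝ) * ν^n))
      ((m.factorial : ℝ) * ν^m * Real.exp (ν * Complex.normSq z)) := by
  have hνne : ν ≠ 0 := ne_of_gt hν
  have H := hasSum_hPoly_mul_conj ν hνne z m m
  rw [if_pos rfl] at H
  rw [← Complex.hasSum_ofReal]
  have heq : (fun n : ℕ => ((‖complexHermite ν m n z (starRingEnd ℂ z)‖^2
      / ((n.factorial : ℝ) * ν^n) : ℝ) : ℂ))
      = fun n : ℕ => hPoly ν m n z (starRingEnd ℂ z) *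
          (starRingEnd ℂ) (hPoly ν m n z (starRingEnd ℂ z)) /
            ((n.factorial : ℂ) * (ν : ℂ) ^ n) := by
    funext n
    rw [complexHermite_eq_hPoly]
    rw [Complex.mul_conj]
    rw [Complex.normSq_eq_norm_sq]
    push_cast
    ring
  rw [heq]
  convert H using 1
  push_cast [Complex.ofReal_exp]
  ring
end
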